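/- (Proposition 1.) Let A be a real n × p matrix, A' a real p × n matrix, B a real q × n matrix, and B' a real n × q matrix. Define the fully lifted and projected operator L̂ := (1/2)·(V_n · A · V_pᵀ)⁻ · V_p · A' · V_nᵀ + (1/2)·(V_n · B' · V_qᵀ)⁻ · V_q · B · V_nᵀ, a 2n × 2n matrix. Then (1/2) · V_nᵀ · L̂ · V_n = A·A' + B'·B. In particular, taking A = N_{k−1}, A' = N_{k−1}*, B = N_k, B' = N_k*, the compression of the fully lifted projected Hodge Laplacian equals the Hodge Laplacian L_k = N_{k−1}N_{k−1}* + N_k* N_k. -/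

import Mathlib

open Matrix

/-- Entrywise negative part of a real matrix: `(X⁻)_{ij} = (X_{ij} − |X_{ij}|)/2`. -/
noncomputable def negPart {m n : Type*} (X : Matrix m n ℝ) : Matrix m n ℝ :=
  fun i j => (X i j - |X i j|) / 2

/-- The lift matrix `V_n`: the identity `I_n` stacked on top of `−I_n`. -/
def liftMat (n : ℕ) : Matrix (Fin n ⊕ Fin n) (Fin n) ℝ :=
  Matrix.fromRows 1 (-1)

lemma lift_conj {n m : ℕ} (X : Matrix (Fin n) (Fin m) ℝ) :
    liftMat n * X * (liftMat m)ᵀ = fromBlocks X (-X) (-X) X := by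
  rw [liftMat, liftMat, transpose_fromRows, fromRows_mul, fromRows_mul,
    mul_fromCols, mul_fromCols, ← fromRows_fromCols_eq_fromBlocks]
  simp [Matrix.neg_mul, Matrix.mul_neg]

lemma negPart_fromBlocks {n m n' m' : ℕ} (a : Matrix (Fin n) (Fin m) ℝ)
    (b : Matrix (Fin n) (Fin m') ℝ) (c : Matrix (Fin n') (Fin m) ℝ)
    (d : Matrix (Fin n') (Fin m') ℝ) :
    negPart (fromBlocks a b c d) =
      fromBlocks (negPart a) (negPart b) (negPart c) (negPart d) := by
  ext (i | i) (j | j) <;> rfl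

lemma negPart_sub_negPart_neg {n m : ℕ} (X : Matrix (Fin n) (Fin m) ℝ) :
    negPart X - negPart (-X) = X := by
  ext i j
  show (X i j - |X i j|) / 2 - ((-X) i j - |(-X) i j|) / 2 = X i j
  simp only [Matrix.neg_apply, abs_neg]
  ring

lemma compress {n : ℕ} (m11 m12 m21 m22 : Matrix (Fin n) (Fin n) ℝ) :
    (liftMat n)ᵀ * fromBlocks m11 m12 m21 m22 * liftMat n =
      m11 - m12 - m21 + m22 := by
  rw [liftMat, transpose_fromRows, fromCols_mul_fromBlocks,
    fromCols_mul_fromRows]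
  simp only [Matrix.transpose_one, Matrix.transpose_neg, Matrix.one_mul,
    Matrix.neg_mul, Matrix.mul_one, Matrix.mul_neg, neg_neg]
  abel

lemma core {n m : ℕ} (X : Matrix (Fin n) (Fin m) ℝ) (Y : Matrix (Fin m) (Fin n) ℝ) :
    (liftMat n)ᵀ * (negPart (liftMat n * X * (liftMat m)ᵀ) *
        (liftMat m * Y * (liftMat n)ᵀ)) * liftMat n = (4 : ℝ) • (X * Y) := by
  rw [lift_conj, lift_conj, negPart_fromBlocks, fromBlocks_multiply, compress]
  have hX : X * Y = negPart X * Y - negPart (-X) * Y := by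
    rw [← Matrix.sub_mul, negPart_sub_negPart_neg]
  rw [hX]
  simp only [Matrix.mul_neg]
  module

/-- Proposition 1: the compression `(1/2)·Vₙᵀ · L̂ · Vₙ` of the fully lifted and projected
Hodge Laplacian equals the Hodge Laplacian `A·A' + B'·B`. -/
theorem compression_of_lifted_laplacian (n p q : ℕ)
    (A : Matrix (Fin n) (Fin p) ℝ) (A' : Matrix (Fin p) (Fin n) ℝ)
    (B : Matrix (Fin q) (Fin n) ℝ) (B' : Matrix (Fin n) (Fin q) ℝ) :
    (1 / 2 : ℝ) • ((liftMat n)ᵀ *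
        ((1 / 2 : ℝ) • (negPart (liftMat n * A * (liftMat p)ᵀ) *
            (liftMat p * A' * (liftMat n)ᵀ)) +
         (1 / 2 : ℝ) • (negPart (liftMat n * B' * (liftMat q)ᵀ) *
            (liftMat q * B * (liftMat n)ᵀ))) *
        liftMat n) = A * A' + B' * B := by
  rw [Matrix.mul_add, Matrix.add_mul, Matrix.mul_smul, Matrix.mul_smul,
    Matrix.smul_mul, Matrix.smul_mul, core, core]
  rw [smul_add, smul_smul, smul_smul, smul_smul, smul_smul]
  norm_num
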